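/- Let C_a, C_t, N_a, s be positive reals, J a natural number, and l a real number with 1 ≤ l < (J+1)/2. Then the limit as x → ∞ of γ_x(l)/x^{2(l−1)} equals C_t·N_a/s, i.e., when the active IRS lies in the first half of the reflection path the received SNR scales as x^{2(l−1)} with coefficient C_t·N_a/s (equation (14), first case). -/

import Mathlib

open Real Filter

/-- Received SNR in the multi-IRS WIT system, as a function of the AIRS index `l`:
`γ_x(l) = C_a·C_t·N_a·x^{2(J−1)} / (s·C_a·x^{2(J−l)} + s·C_t·x^{2(l−1)} + s²)`. -/
noncomputable def snr (Ca Ct Na s : ℝ) (J : ℕ) (x l : ℝ) : ℝ :=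
  Ca * Ct * Na * x ^ (2 * ((J : ℝ) - 1)) /
    (s * Ca * x ^ (2 * ((J : ℝ) - l)) + s * Ct * x ^ (2 * (l - 1)) + s ^ 2)

/-- Equation (14), first case: if the AIRS lies in the first half of the path,
`1 ≤ l < (J+1)/2`, then as `x → ∞` the received SNR scales as `x^{2(l−1)}` with
coefficient `C_t·N_a/s`. -/
theorem stmt_9 (Ca Ct Na s : ℝ) (hCa : 0 < Ca) (hCt : 0 < Ct) (hNa : 0 < Na) (hs : 0 < s)
    (J : ℕ) (l : ℝ) (hl1 : 1 ≤ l) (hl2 : l < ((J : ℝ) + 1) / 2) :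
    Tendsto (fun x : ℝ => snr Ca Ct Na s J x l / x ^ (2 * (l - 1))) atTop
      (nhds (Ct * Na / s)) := by
  have hJ : (1:ℝ) < (J:ℝ) := by linarith
  have key : ∀ᶠ x : ℝ in atTop,
      Ca * Ct * Na /
        (s * Ca + s * Ct * x ^ (2 * (2*l - 1 - (J:ℝ))) + s ^ 2 * x ^ (2 * (l - (J:ℝ))))
      = snr Ca Ct Na s J x l / x ^ (2 * (l - 1)) := by
    filter_upwards [eventually_gt_atTop (0:ℝ)] with x hx
    have hApos := rpow_pos_of_pos hx (2 * ((J:ℝ) - l))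
    have hBpos := rpow_pos_of_pos hx (2 * (l - 1))
    have hA : x ^ (2 * ((J:ℝ) - l)) ≠ 0 := hApos.ne'
    have hB : x ^ (2 * (l - 1)) ≠ 0 := hBpos.ne'
    have e1 : x ^ (2 * ((J:ℝ) - 1)) = x ^ (2 * ((J:ℝ) - l)) * x ^ (2 * (l - 1)) := by
      rw [← rpow_add hx]; ring_nf
    have e2 : x ^ (2 * (2*l - 1 - (J:ℝ))) = x ^ (2 * (l - 1)) / x ^ (2 * ((J:ℝ) - l)) := by
      rw [← rpow_sub hx]; ring_nf
    have e3 : x ^ (2 * (l - (J:ℝ))) = (x ^ (2 * ((J:ℝ) - l)))⁻¹ := by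
      rw [show 2 * (l - (J:ℝ)) = -(2 * ((J:ℝ) - l)) by ring, rpow_neg hx.le]
    have hD : s * Ca * x ^ (2 * ((J:ℝ) - l)) + s * Ct * x ^ (2 * (l - 1)) + s ^ 2 ≠ 0 := by
      positivity
    rw [snr, e1, e2, e3]
    field_simp
  have hlJ : l < (J:ℝ) := by linarith
  have h1 : Tendsto (fun x : ℝ => x ^ (2 * (2*l - 1 - (J:ℝ)))) atTop (nhds 0) := by
    have := tendsto_rpow_neg_atTop (show (0:ℝ) < -(2 * (2*l - 1 - (J:ℝ))) by linarith)
    simpa using this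
  have h2 : Tendsto (fun x : ℝ => x ^ (2 * (l - (J:ℝ)))) atTop (nhds 0) := by
    have := tendsto_rpow_neg_atTop (show (0:ℝ) < -(2 * (l - (J:ℝ))) by linarith)
    simpa using this
  have hden : Tendsto (fun x : ℝ =>
      s * Ca + s * Ct * x ^ (2 * (2*l - 1 - (J:ℝ))) + s ^ 2 * x ^ (2 * (l - (J:ℝ))))
      atTop (nhds (s * Ca)) := by
    have h := ((tendsto_const_nhds (x := s * Ca) (f := (atTop : Filter ℝ))).add
      (h1.const_mul (s * Ct))).add (h2.const_mul (s ^ 2))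
    simpa using h
  have hmain := (tendsto_const_nhds (x := Ca * Ct * Na) (f := atTop)).div hden
    (by positivity)
  have : Ca * Ct * Na / (s * Ca) = Ct * Na / s := by
    field_simp
  rw [this] at hmain
  exact hmain.congr' key
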